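/- Let (X, d) be a metric space, let x_1, …, x_n ∈ X, let S ⊆ X be a nonempty finite set containing x_1, …, x_n, let ε > 0, ω₂ > 0, and let ℓ_1, …, ℓ_n : X → ℝ each be ω₂-Lipschitz with respect to d. Define B(λ) = λε + (1/n)·Σ_{i=1}^n max_{x ∈ S} [ℓ_i(x) − λ·d(x, x_i)²] for λ ≥ 0. Then every minimizer of B over [0, ∞) (every λ_n ≥ 0 with B(λ_n) = inf_{λ ≥ 0} B(λ)) satisfies λ_n ≤ ω₂ / √ε. -/

import Mathlib

/-- Bound on the optimal dual variable (used at line eq:bounds in the proof of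
Theorem 3.1): every minimizer over `[0, ∞)` of the restricted dual objective `B`
satisfies `λₙ ≤ ω₂ / √ε`. -/
theorem stmt_8 {X : Type*} [MetricSpace X]
    (n : ℕ) (hn : 0 < n) (xs : Fin n → X)
    (S : Finset X) (hS : S.Nonempty) (hxs : ∀ i, xs i ∈ S)
    (ε : ℝ) (hε : 0 < ε)
    (ω₂ : ℝ) (hω₂ : 0 < ω₂)
    (ℓ : Fin n → X → ℝ)
    (hlip : ∀ i, ∀ u v : X, |ℓ i u - ℓ i v| ≤ ω₂ * dist u v)
    (B : ℝ → ℝ)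
    (hB : ∀ lam, B lam =
      lam * ε + (1 / n) * ∑ i, S.sup' hS (fun x => ℓ i x - lam * dist x (xs i) ^ 2))
    (lamn : ℝ) (hlamn0 : 0 ≤ lamn)
    (hmin : B lamn = ⨅ lam : Set.Ici (0 : ℝ), B lam.1) :
    lamn ≤ ω₂ / Real.sqrt ε := by
  set s := Real.sqrt ε with hsdef
  have hs : 0 < s := Real.sqrt_pos.mpr hε
  have hs2 : s ^ 2 = ε := Real.sq_sqrt hε.le
  set lam0 : ℝ := ω₂ / (2 * s) with hlam0def
  have hlam0 : 0 < lam0 := div_pos hω₂ (by positivity)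
  set C : ℝ := (1 / n) * ∑ i, ℓ i (xs i) with hCdef
  have hninv : (0:ℝ) < 1 / n := by positivity
  -- lower bound: for any λ ≥ 0, B λ ≥ λ ε + C
  have hlow : ∀ lam : ℝ, 0 ≤ lam → lam * ε + C ≤ B lam := by
    intro lam hlam
    rw [hB, hCdef]
    have hsum : ∑ i, ℓ i (xs i)
        ≤ ∑ i, S.sup' hS (fun x => ℓ i x - lam * dist x (xs i) ^ 2) := by
      refine Finset.sum_le_sum fun i _ => ?_
      have := Finset.le_sup' (fun x => ℓ i x - lam * dist x (xs i) ^ 2 : X → ℝ) (hxs i)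
      refine le_trans ?_ this
      simp
    have := mul_le_mul_of_nonneg_left hsum hninv.le
    linarith
  -- upper bound at lam0
  have hup : B lam0 ≤ lam0 * ε + C + ω₂ ^ 2 / (4 * lam0) := by
    rw [hB]
    have : ∀ i : Fin n,
        S.sup' hS (fun x => ℓ i x - lam0 * dist x (xs i) ^ 2)
          ≤ ℓ i (xs i) + ω₂ ^ 2 / (4 * lam0) := by
      intro i
      refine Finset.sup'_le _ _ fun x hx => ?_
      have h1 : ℓ i x - ℓ i (xs i) ≤ ω₂ * dist x (xs i) :=
        (abs_le.mp (hlip i x (xs i))).2.trans_eq' rfl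
      have h2 : ω₂ * dist x (xs i) - lam0 * dist x (xs i) ^ 2 ≤ ω₂ ^ 2 / (4 * lam0) := by
        have key : 0 ≤ lam0 * (dist x (xs i) - ω₂ / (2 * lam0)) ^ 2 := by positivity
        have expand : lam0 * (dist x (xs i) - ω₂ / (2 * lam0)) ^ 2
            = lam0 * dist x (xs i) ^ 2 - ω₂ * dist x (xs i) + ω₂ ^ 2 / (4 * lam0) := by
          field_simp
          ring
        nlinarith [key, expand]
      nlinarith [h1, h2]
    have hsum : ∑ i, S.sup' hS (fun x => ℓ i x - lam0 * dist x (xs i) ^ 2)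
        ≤ ∑ i : Fin n, (ℓ i (xs i) + ω₂ ^ 2 / (4 * lam0)) :=
      Finset.sum_le_sum fun i _ => this i
    have hcard : (1 / (n:ℝ)) * ∑ i : Fin n, (ℓ i (xs i) + ω₂ ^ 2 / (4 * lam0))
        = C + ω₂ ^ 2 / (4 * lam0) := by
      rw [Finset.sum_add_distrib, Finset.sum_const, Finset.card_univ, Fintype.card_fin]
      have hn' : (n:ℝ) ≠ 0 := Nat.cast_ne_zero.mpr hn.ne'
      have hl0 : lam0 ≠ 0 := hlam0.ne'
      rw [hCdef]
      field_simp
      have h4 : 4 * lam0 * (↑n * (ω₂ ^ 2 / (4 * lam0))) = ↑n * ω₂ ^ 2 := by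
        rw [mul_comm, mul_assoc, div_mul_cancel₀ _ (mul_ne_zero four_ne_zero hl0)]
      rw [nsmul_eq_mul, mul_add, h4]
      ring
    calc lam0 * ε + (1 / n) * ∑ i, S.sup' hS (fun x => ℓ i x - lam0 * dist x (xs i) ^ 2)
        ≤ lam0 * ε + (1 / (n:ℝ)) * ∑ i : Fin n, (ℓ i (xs i) + ω₂ ^ 2 / (4 * lam0)) := by
          gcongr
      _ = lam0 * ε + (C + ω₂ ^ 2 / (4 * lam0)) := by rw [hcard]
      _ = lam0 * ε + C + ω₂ ^ 2 / (4 * lam0) := by ring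
  -- B lamn ≤ B lam0 via the infimum
  have hbdd : BddBelow (Set.range fun lam : Set.Ici (0:ℝ) => B lam.1) := by
    refine ⟨C, fun y hy => ?_⟩
    obtain ⟨⟨lam, hlam⟩, rfl⟩ := hy
    have := hlow lam hlam
    nlinarith [mul_nonneg hlam hε.le]
  have hle : B lamn ≤ B lam0 := by
    rw [hmin]
    exact ciInf_le hbdd ⟨lam0, hlam0.le⟩
  -- combine
  have h1 : lamn * ε + C ≤ B lamn := hlow lamn hlamn0
  have hfinal : lamn * ε ≤ ω₂ * s := by
    have hval : lam0 * ε + ω₂ ^ 2 / (4 * lam0) = ω₂ * s := by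
      rw [hlam0def, ← hs2]
      field_simp
      ring
    nlinarith [h1, hle, hup]
  have : lamn ≤ ω₂ * s / ε := (le_div_iff₀ hε).mpr hfinal
  calc lamn ≤ ω₂ * s / ε := this
    _ = ω₂ / s := by rw [← hs2]; field_simp
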